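/- arXiv:0710.3287 — 2 statements merged into one kernel-verified Lean document; each statement's English description precedes it below -/
import Mathlib

section
/- For c ∈ (0,1), the sequence p_k = (k^k / k!) (1-c) c^k e^{-kc}, k = 0, 1, 2, ..., defines a probability distribution on the nonnegative integers, i.e., all p_k ≥ 0 and ∑_{k=0}^∞ p_k = 1. -/
open Finset Polynomial

lemma lemB (n : ℕ) (f : ℕ → ℝ) :
    ∑ k ∈ range (n+2), (-1:ℝ)^k * ((n+1).choose k) * f k
      = ∑ k ∈ range (n+1), (-1:ℝ)^k * (n.choose k) * (f k - f (k+1)) := by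
  set U : ℝ := ∑ k ∈ range (n+1), (-1:ℝ)^k * (n.choose k) * f k with hUdef
  have h2 : ∑ k ∈ range (n+2), (-1:ℝ)^k * (n.choose k) * f k = U := by
    rw [Finset.sum_range_succ, Nat.choose_succ_self]; simp [hUdef]
  have h3 : ∑ k ∈ range (n+1), (-1:ℝ)^(k+1) * (n.choose (k+1)) * f (k+1)
      = U - f 0 := by
    have h := Finset.sum_range_succ' (fun k => (-1:ℝ)^k * (n.choose k) * f k) (n+1)
    rw [h2] at h
    simp only [Nat.choose_zero_right, Nat.cast_one, pow_zero, one_mul, mul_one] at h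
    linarith [h]
  have h1 : ∑ k ∈ range (n+2), (-1:ℝ)^k * ((n+1).choose k) * f k
      = (∑ k ∈ range (n+1), (-((-1:ℝ)^k * (n.choose k) * f (k+1))
          + (-1:ℝ)^(k+1) * (n.choose (k+1)) * f (k+1))) + f 0 := by
    rw [Finset.sum_range_succ' (fun k => (-1:ℝ)^k * ((n+1).choose k) * f k) (n+1)]
    simp only [Nat.choose_zero_right, Nat.cast_one, pow_zero, one_mul, mul_one]
    congr 1
    refine Finset.sum_congr rfl fun k _ => ?_
    rw [Nat.choose_succ_succ]
    push_cast
    ring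
  rw [h1, Finset.sum_add_distrib, h3, Finset.sum_neg_distrib]
  simp only [mul_sub]
  rw [Finset.sum_sub_distrib]
  ring

lemma lemA : ∀ (n : ℕ) (p : Polynomial ℝ), p.degree < n →
    ∑ k ∈ range (n+1), (-1:ℝ)^k * (n.choose k) * p.eval (k:ℝ) = 0 := by
  intro n
  induction n with
  | zero =>
    intro p hp
    have : p = 0 := by
      by_contra h
      rw [Polynomial.degree_eq_natDegree h] at hp
      exact absurd hp (by exact_mod_cast not_lt.2 (Nat.zero_le _))
    simp [this]
  | succ n ih =>
    intro p hp
    rcases eq_or_ne p 0 with rfl | hp0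
    · simp
    have key := lemB n (fun k => p.eval (k:ℝ))
    rw [key]
    set q : Polynomial ℝ := p - p.comp (X + 1) with hq
    have hn1 : (X + 1 : Polynomial ℝ).natDegree = 1 := by
      simpa using Polynomial.natDegree_X_add_C (1:ℝ)
    have hlc : p.leadingCoeff = (p.comp (X + 1)).leadingCoeff := by
      rw [Polynomial.leadingCoeff_comp (by rw [hn1]; simp)]
      have : (X + 1 : Polynomial ℝ).leadingCoeff = 1 := by
        simpa using Polynomial.leadingCoeff_X_add_C (1:ℝ)
      rw [this, one_pow, mul_one]
    have hc0 : p.comp (X + 1) ≠ 0 := by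
      intro h
      apply hp0
      rw [← Polynomial.leadingCoeff_eq_zero, hlc, h, Polynomial.leadingCoeff_zero]
    have hdc : (p.comp (X + 1)).degree = p.degree := by
      rw [Polynomial.degree_eq_natDegree hc0, Polynomial.degree_eq_natDegree hp0,
        Polynomial.natDegree_comp, hn1, mul_one]
    have hdq : q.degree < (n : WithBot ℕ) := by
      have h1 : q.degree < p.degree := Polynomial.degree_sub_lt hdc.symm hp0 hlc
      have h2 : p.degree ≤ (n : WithBot ℕ) := by
        rw [Polynomial.degree_eq_natDegree hp0] at hp ⊢
        exact_mod_cast Nat.lt_succ_iff.mp (by exact_mod_cast hp)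
      exact lt_of_lt_of_le h1 h2
    have := ih q hdq
    rw [← this]
    refine Finset.sum_congr rfl fun k _ => ?_
    have : q.eval (k:ℝ) = p.eval (k:ℝ) - p.eval ((k:ℝ)+1) := by
      simp [hq, Polynomial.eval_comp]
    rw [this]
    push_cast
    ring

lemma lemC : ∀ n : ℕ, ∑ k ∈ range (n+1), (-1:ℝ)^k * (n.choose k) * (k:ℝ)^n
    = (-1:ℝ)^n * (Nat.factorial n) := by
  intro n
  induction n with
  | zero => simp
  | succ n ih =>
    have key := lemB n (fun k => ((k:ℝ))^(n+1))
    rw [key]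
    set q : Polynomial ℝ := X^(n+1) - (X+1)^(n+1) + ((n:ℝ)+1) • X^n with hqdef
    have hdq : q.degree < (n : WithBot ℕ) := by
      rw [Polynomial.degree_lt_iff_coeff_zero]
      intro m hm
      have hm' : (n:ℕ) ≤ m := by exact_mod_cast hm
      simp only [hqdef, Polynomial.coeff_add, Polynomial.coeff_sub, Polynomial.coeff_smul,
        Polynomial.coeff_X_pow, Polynomial.coeff_X_add_one_pow, smul_eq_mul]
      rcases eq_or_lt_of_le hm' with rfl | hlt
      · rw [Nat.choose_succ_self_right]
        simp only [if_neg (show ¬ n = n+1 by omega), if_pos rfl]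
        push_cast
        ring
      · rcases eq_or_lt_of_le (Nat.succ_le_of_lt hlt) with rfl | hlt2
        · simp
        · rw [Nat.choose_eq_zero_of_lt hlt2]
          rw [if_neg (show ¬ m = n+1 by omega), if_neg (show ¬ m = n by omega)]
          simp
    have hA := lemA n q hdq
    have hterm : ∀ k ∈ range (n+1), (-1:ℝ)^k * (n.choose k) * (((k:ℝ))^(n+1) - ((k+1:ℕ):ℝ)^(n+1))
        = (-1:ℝ)^k * (n.choose k) * q.eval (k:ℝ)
          - ((n:ℝ)+1) * ((-1:ℝ)^k * (n.choose k) * (k:ℝ)^n) := by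
      intro k _
      have : q.eval (k:ℝ) = (k:ℝ)^(n+1) - ((k:ℝ)+1)^(n+1) + ((n:ℝ)+1) * (k:ℝ)^n := by
        simp [hqdef]
      rw [this]
      push_cast
      ring
    rw [Finset.sum_congr rfl hterm, Finset.sum_sub_distrib, hA, ← Finset.mul_sum, ih]
    rw [Nat.factorial_succ]
    push_cast
    ring

lemma antidiagSum (c : ℝ) (n : ℕ) :
    ∑ k ∈ range (n+1),
      ((k:ℝ)^k / (Nat.factorial k)) * c^k * (-((k:ℝ) * c))^(n-k) / (Nat.factorial (n-k))
      = c^n := by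
  have hstep : ∀ k ∈ range (n+1),
      ((k:ℝ)^k / (Nat.factorial k)) * c^k * (-((k:ℝ) * c))^(n-k) / (Nat.factorial (n-k))
      = ((-1:ℝ)^k * (n.choose k) * (k:ℝ)^n) * ((-1:ℝ)^n * c^n / (Nat.factorial n)) := by
    intro k hk
    have hk' : k ≤ n := by
      simp only [Finset.mem_range] at hk; omega
    have h1 : (-((k:ℝ) * c))^(n-k) = (-1:ℝ)^(n-k) * (k:ℝ)^(n-k) * c^(n-k) := by
      rw [neg_pow, mul_pow]; ring
    have h2 : (k:ℝ)^k * (k:ℝ)^(n-k) = (k:ℝ)^n := by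
      rw [← pow_add]; congr 1; omega
    have h3 : c^k * c^(n-k) = c^n := by
      rw [← pow_add]; congr 1; omega
    have h4 : (-1:ℝ)^(n-k) = (-1:ℝ)^n * (-1:ℝ)^k := by
      rw [← pow_add]
      have hnk : n + k = (n - k) + 2*k := by omega
      rw [hnk, pow_add, pow_mul]
      simp
    have h5 : (n.choose k : ℝ) = (Nat.factorial n) / ((Nat.factorial k) * (Nat.factorial (n-k))) :=
      Nat.cast_choose ℝ hk'
    have hkf : ((Nat.factorial k : ℕ) : ℝ) ≠ 0 := by exact_mod_cast (Nat.factorial_ne_zero k)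
    have hnkf : ((Nat.factorial (n-k) : ℕ) : ℝ) ≠ 0 := by exact_mod_cast (Nat.factorial_ne_zero (n-k))
    have hnf : ((Nat.factorial n : ℕ) : ℝ) ≠ 0 := by exact_mod_cast (Nat.factorial_ne_zero n)
    calc ((k:ℝ)^k / (Nat.factorial k)) * c^k * (-((k:ℝ) * c))^(n-k) / (Nat.factorial (n-k))
        = ((-1:ℝ)^(n-k)) * (((k:ℝ)^k * (k:ℝ)^(n-k)) * (c^k * c^(n-k)))
            / ((Nat.factorial k) * (Nat.factorial (n-k))) := by
          rw [h1]; ring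
      _ = ((-1:ℝ)^n * (-1:ℝ)^k) * ((k:ℝ)^n * c^n) / ((Nat.factorial k) * (Nat.factorial (n-k))) := by
          rw [h2, h3, h4]
      _ = ((-1:ℝ)^k * (n.choose k) * (k:ℝ)^n) * ((-1:ℝ)^n * c^n / (Nat.factorial n)) := by
          rw [h5]
          field_simp
  rw [Finset.sum_congr rfl hstep, ← Finset.sum_mul, lemC]
  have : ((-1:ℝ)^n) * ((-1:ℝ)^n) = 1 := by
    rw [← pow_add]
    have : n + n = 2*n := by omega
    rw [this, pow_mul]; simp
  field_simp
  linear_combination c^n * this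


lemma exp_tsum (x : ℝ) : ∑' m : ℕ, x^m / (Nat.factorial m) = Real.exp x := by
  rw [Real.exp_eq_exp_ℝ, NormedSpace.exp_eq_tsum_div]

lemma pow_self_div_factorial_le (k : ℕ) :
    ((k:ℝ)^k / (Nat.factorial k)) ≤ Real.exp 1 ^ k := by
  have h := Summable.le_tsum (Real.summable_pow_div_factorial (k:ℝ)) k
    (fun j _ => by positivity)
  rw [exp_tsum] at h
  calc ((k:ℝ)^k / (Nat.factorial k)) ≤ Real.exp (k:ℝ) := h
    _ = Real.exp 1 ^ k := by
        rw [← Real.exp_nat_mul]; norm_num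

set_option maxHeartbeats 1000000 in
lemma baseCase {c : ℝ} (h0 : 0 < c) (h8 : c < 1/8) :
    ∑' k : ℕ, ((k:ℝ)^k / (Nat.factorial k)) * (c * Real.exp (-c))^k = (1-c)⁻¹ := by
  set f : ℕ × ℕ → ℝ := fun p =>
    ((p.1:ℝ)^p.1 / (Nat.factorial p.1)) * c^p.1 * (-((p.1:ℝ) * c))^p.2 / (Nat.factorial p.2)
    with hf
  -- absolute values
  have habsval : ∀ p : ℕ × ℕ, |f p| =
      ((p.1:ℝ)^p.1 / (Nat.factorial p.1)) * c^p.1 * ((p.1:ℝ) * c)^p.2 / (Nat.factorial p.2) := by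
    intro p
    rw [hf]
    rw [abs_div, abs_mul, abs_pow, abs_neg]
    have h1 : |((p.1:ℝ)^p.1 / (Nat.factorial p.1)) * c^p.1| =
        ((p.1:ℝ)^p.1 / (Nat.factorial p.1)) * c^p.1 := abs_of_nonneg (by positivity)
    have h2 : |((p.1:ℝ) * c)| = (p.1:ℝ) * c := abs_of_nonneg (by positivity)
    have h3 : |((Nat.factorial p.2 : ℕ):ℝ)| = ((Nat.factorial p.2 : ℕ):ℝ) := abs_of_nonneg (by positivity)
    rw [h1, h2, h3]
  have hrowsum : ∀ k : ℕ, ∑' m : ℕ, |f (k, m)|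
      = ((k:ℝ)^k / (Nat.factorial k)) * (c * Real.exp c)^k := by
    intro k
    have : (fun m => |f (k,m)|) = fun m =>
        (((k:ℝ)^k / (Nat.factorial k)) * c^k) * (((k:ℝ) * c)^m / (Nat.factorial m)) := by
      funext m
      rw [habsval (k,m)]
      ring
    rw [this, tsum_mul_left, exp_tsum]
    rw [mul_pow, Real.exp_nat_mul]
    ring
  have hrowsummable : ∀ k : ℕ, Summable fun m => |f (k, m)| := by
    intro k
    have : (fun m => |f (k,m)|) = fun m =>
        (((k:ℝ)^k / (Nat.factorial k)) * c^k) * (((k:ℝ) * c)^m / (Nat.factorial m)) := by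
      funext m
      rw [habsval (k,m)]
      ring
    rw [this]
    exact (Real.summable_pow_div_factorial _).mul_left _
  have habs : Summable fun p => |f p| := by
    rw [summable_prod_of_nonneg (fun p => abs_nonneg _)]
    refine ⟨hrowsummable, ?_⟩
    set r : ℝ := Real.exp 1 * Real.exp 1 / 8 with hrdef
    have hr0 : 0 ≤ r := by positivity
    have hr1 : r < 1 := by
      nlinarith [Real.exp_one_lt_d9, Real.exp_pos 1]
    refine Summable.of_nonneg_of_le (fun k => ?_) (fun k => ?_)
      (summable_geometric_of_lt_one hr0 hr1)
    · rw [hrowsum k]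
      positivity
    · rw [hrowsum k]
      have hce : 0 ≤ c * Real.exp c := by positivity
      have h1 : ((k:ℝ)^k / (Nat.factorial k)) * (c * Real.exp c)^k
          ≤ Real.exp 1 ^ k * (c * Real.exp c)^k :=
        mul_le_mul_of_nonneg_right (pow_self_div_factorial_le k) (pow_nonneg hce k)
      have h2 : Real.exp 1 ^ k * (c * Real.exp c)^k = (Real.exp 1 * (c * Real.exp c))^k :=
        (mul_pow _ _ k).symm
      have h3 : Real.exp 1 * (c * Real.exp c) ≤ r := by
        have hec : Real.exp c ≤ Real.exp 1 := Real.exp_le_exp.mpr (by linarith)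
        have h4 : c * Real.exp c ≤ (1/8) * Real.exp 1 :=
          mul_le_mul (by linarith) hec (Real.exp_pos c).le (by norm_num)
        calc Real.exp 1 * (c * Real.exp c)
            ≤ Real.exp 1 * ((1/8) * Real.exp 1) :=
              mul_le_mul_of_nonneg_left h4 (Real.exp_pos 1).le
          _ = r := by rw [hrdef]; ring
      calc ((k:ℝ)^k / (Nat.factorial k)) * (c * Real.exp c)^k
          ≤ (Real.exp 1 * (c * Real.exp c))^k := by rw [← h2]; exact h1
        _ ≤ r ^ k := pow_le_pow_left₀ (by positivity) h3 k
  have hsum : Summable f := summable_abs_iff.mp habs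
  have hL : ∑' p : ℕ × ℕ, f p
      = ∑' k : ℕ, ((k:ℝ)^k / (Nat.factorial k)) * (c * Real.exp (-c))^k := by
    rw [Summable.tsum_prod hsum]
    refine tsum_congr fun k => ?_
    have : (fun m => f (k,m)) = fun m =>
        (((k:ℝ)^k / (Nat.factorial k)) * c^k) * ((-((k:ℝ) * c))^m / (Nat.factorial m)) := by
      funext m
      rw [hf]
      ring
    rw [this, tsum_mul_left, exp_tsum]
    have : -((k:ℝ) * c) = (k:ℝ) * (-c) := by ring
    rw [this, Real.exp_nat_mul, mul_pow]
    ring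
  have hR : ∑' p : ℕ × ℕ, f p = (1-c)⁻¹ := by
    calc ∑' p : ℕ × ℕ, f p
        = ∑' σ : (Σ n : ℕ, Finset.HasAntidiagonal.antidiagonal n), f (Finset.HasAntidiagonal.sigmaAntidiagonalEquivProd σ) :=
          (Finset.HasAntidiagonal.sigmaAntidiagonalEquivProd.tsum_eq f).symm
      _ = ∑' (n : ℕ), ∑' (x : Finset.HasAntidiagonal.antidiagonal n), f x := by
          refine Summable.tsum_sigma ?_
          exact Finset.HasAntidiagonal.sigmaAntidiagonalEquivProd.summable_iff.mpr hsum
      _ = ∑' (n : ℕ), ∑ x ∈ Finset.HasAntidiagonal.antidiagonal n, f x := by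
          refine tsum_congr fun n => ?_
          exact Finset.tsum_subtype _ f
      _ = ∑' (n : ℕ), c^n := by
          refine tsum_congr fun n => ?_
          rw [Finset.Nat.sum_antidiagonal_eq_sum_range_succ_mk]
          exact antidiagSum c n
      _ = (1-c)⁻¹ := tsum_geometric_of_lt_one (by linarith) (by linarith)
  rw [← hL, hR]
noncomputable def aa : ℕ → ℝ := fun k => (k:ℝ)^k / (Nat.factorial k)

noncomputable def pp : FormalMultilinearSeries ℝ ℝ ℝ := FormalMultilinearSeries.ofScalars ℝ aa

lemma aa_nonneg (k : ℕ) : 0 ≤ aa k := by unfold aa; positivity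

lemma pp_radius : ENNReal.ofReal (Real.exp 1)⁻¹ ≤ pp.radius := by
  apply ENNReal.le_of_forall_nnreal_lt
  intro r hr
  have hr' : (r:ℝ) < (Real.exp 1)⁻¹ := by
    rw [← ENNReal.ofReal_coe_nnreal] at hr
    exact (ENNReal.ofReal_lt_ofReal_iff (by positivity)).mp hr
  apply pp.le_radius_of_summable_norm
  have hnorm : ∀ n : ℕ, ‖pp n‖ * (r:ℝ)^n = aa n * (r:ℝ)^n := by
    intro n
    rw [pp, FormalMultilinearSeries.ofScalars_norm]
    congr 1
    exact abs_of_nonneg (aa_nonneg n)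
  have hq : 0 ≤ Real.exp 1 * r := by positivity
  have hq1 : Real.exp 1 * r < 1 := by
    have h := mul_lt_mul_of_pos_left hr' (Real.exp_pos 1)
    rwa [mul_inv_cancel₀ (ne_of_gt (Real.exp_pos 1))] at h
  refine Summable.of_nonneg_of_le (fun n => ?_) (fun n => ?_)
    (summable_geometric_of_lt_one hq hq1)
  · rw [hnorm n]
    exact mul_nonneg (aa_nonneg n) (by positivity)
  · rw [hnorm n]
    calc aa n * (r:ℝ)^n ≤ Real.exp 1 ^ n * (r:ℝ)^n :=
          mul_le_mul_of_nonneg_right (pow_self_div_factorial_le n) (by positivity)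
      _ = (Real.exp 1 * r)^n := (mul_pow _ _ n).symm

lemma pp_radius_pos : 0 < pp.radius :=
  lt_of_lt_of_le (by simp [Real.exp_pos]) pp_radius

lemma inner_lt (c : ℝ) (hc : c ∈ Set.Ioo (0:ℝ) 1) : c * Real.exp (-c) < (Real.exp 1)⁻¹ := by
  obtain ⟨h0, h1⟩ := hc
  have h := Real.add_one_lt_exp (x := c - 1) (by intro h; apply absurd h; intro h'; linarith)
  have hc' : c < Real.exp (c - 1) := by linarith
  calc c * Real.exp (-c) < Real.exp (c-1) * Real.exp (-c) :=
        mul_lt_mul_of_pos_right hc' (Real.exp_pos _)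
    _ = Real.exp (-1) := by rw [← Real.exp_add]; ring_nf
    _ = (Real.exp 1)⁻¹ := Real.exp_neg 1

lemma inner_mem_ball (c : ℝ) (hc : c ∈ Set.Ioo (0:ℝ) 1) :
    c * Real.exp (-c) ∈ Metric.eball (0:ℝ) pp.radius := by
  rw [Metric.mem_eball, edist_zero_right, ← ofReal_norm]
  refine lt_of_lt_of_le ?_ pp_radius
  rw [ENNReal.ofReal_lt_ofReal_iff (by positivity)]
  have h0 : 0 < c * Real.exp (-c) := by
    have := Real.exp_pos (-c); nlinarith [hc.1]
  rw [Real.norm_eq_abs, abs_of_pos h0]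
  exact inner_lt c hc

lemma G_analytic : AnalyticOnNhd ℝ
    (fun c => (1 - c) * pp.sum (c * Real.exp (-c))) (Set.Ioo (0:ℝ) 1) := by
  have hF : AnalyticOnNhd ℝ pp.sum (EMetric.ball (0:ℝ) pp.radius) :=
    (pp.hasFPowerSeriesOnBall pp_radius_pos).analyticOnNhd
  have hexp : ∀ x : ℝ, AnalyticAt ℝ Real.exp x := by
    intro x
    rw [Real.exp_eq_exp_ℝ]
    exact NormedSpace.exp_analytic x
  have hinner : AnalyticOnNhd ℝ (fun c : ℝ => c * Real.exp (-c)) (Set.Ioo (0:ℝ) 1) := by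
    intro x hx
    exact (analyticAt_id).mul ((hexp (-x)).comp (analyticAt_id.neg))
  have hcomp : AnalyticOnNhd ℝ (fun c : ℝ => pp.sum (c * Real.exp (-c))) (Set.Ioo (0:ℝ) 1) :=
    hF.comp hinner (fun c hc => inner_mem_ball c hc)
  exact (analyticOnNhd_const.sub analyticOnNhd_id).mul hcomp

lemma pp_sum_eq (z : ℝ) : pp.sum z = ∑' k : ℕ, aa k * z^k := by
  refine tsum_congr fun k => ?_
  rw [pp, FormalMultilinearSeries.ofScalars_apply_eq, smul_eq_mul]

lemma G_eq_one : ∀ c ∈ Set.Ioo (0:ℝ) 1, (1 - c) * pp.sum (c * Real.exp (-c)) = 1 := by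
  have hbase : ∀ c ∈ Set.Ioo (0:ℝ) (1/8),
      (fun c => (1 - c) * pp.sum (c * Real.exp (-c))) c = (fun _ => (1:ℝ)) c := by
    intro c hc
    simp only
    have hb : ∑' k : ℕ, aa k * (c * Real.exp (-c))^k = (1-c)⁻¹ := by
      simp only [aa]
      exact baseCase hc.1 hc.2
    rw [pp_sum_eq, hb]
    have : (1:ℝ) - c ≠ 0 := by
      have := hc.2; intro h; rw [sub_eq_zero] at h; rw [← h] at this; norm_num at this
    field_simp
  have hfreq : ∃ᶠ z in nhdsWithin (1/16 : ℝ) {(1/16:ℝ)}ᶜ,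
      (fun c => (1 - c) * pp.sum (c * Real.exp (-c))) z = (fun _ => (1:ℝ)) z := by
    apply Filter.Eventually.frequently
    apply Filter.Eventually.filter_mono nhdsWithin_le_nhds
    have hmem : Set.Ioo (0:ℝ) (1/8) ∈ nhds (1/16 : ℝ) :=
      isOpen_Ioo.mem_nhds (by constructor <;> norm_num)
    exact Filter.eventually_of_mem hmem hbase
  have := G_analytic.eqOn_of_preconnected_of_frequently_eq analyticOnNhd_const
    isPreconnected_Ioo (by constructor <;> norm_num : (1/16:ℝ) ∈ Set.Ioo (0:ℝ) 1) hfreq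
  intro c hc
  exact this hc

theorem stmt_3 (c : ℝ) (hc : c ∈ Set.Ioo (0:ℝ) 1) :
    (∀ k : ℕ, 0 ≤ ((k : ℝ) ^ k / (Nat.factorial k)) * (1 - c) * c ^ k *
      Real.exp (-(k * c))) ∧
    (∑' k : ℕ, ((k : ℝ) ^ k / (Nat.factorial k)) * (1 - c) * c ^ k *
      Real.exp (-(k * c))) = 1 := by
  obtain ⟨h0, h1⟩ := hc
  constructor
  · intro k
    apply mul_nonneg
    apply mul_nonneg
    apply mul_nonneg
    · positivity
    · linarith
    · positivity
    · positivity
  · have hterm : ∀ k : ℕ, ((k : ℝ) ^ k / (Nat.factorial k)) * (1 - c) * c ^ k *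
        Real.exp (-(k * c)) = (1 - c) * (aa k * (c * Real.exp (-c))^k) := by
      intro k
      have : -((k:ℝ) * c) = (k:ℝ) * (-c) := by ring
      rw [this, Real.exp_nat_mul, aa, mul_pow]
      ring
    rw [tsum_congr hterm, tsum_mul_left, ← pp_sum_eq]
    exact G_eq_one c ⟨h0, h1⟩
end

section
/- Let t_{ν,δ} denote the noncentral t density with ν > 0 degrees of freedom and noncentrality δ > 0, and t_ν the central t density. Then the likelihood ratio ρ(x) = t_{ν,δ}(x)/t_ν(x) satisfies lim_{x→∞} ρ(x) = e^{-δ²/2} ∑_{k=0}^∞ Γ((ν+k+1)/2) (√2 δ)^k / (k! Γ((ν+1)/2)), and this limit is finite. -/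
open Filter Real

private lemma gautschi_aux {x : ℝ} (hx : 0 < x) :
    Real.Gamma (x + 1/2) ≤ Real.sqrt x * Real.Gamma x := by
  have h1 : (0:ℝ) < Real.Gamma x := Real.Gamma_pos_of_pos hx
  have hc := Real.convexOn_log_Gamma.2 (Set.mem_Ioi.mpr hx)
      (Set.mem_Ioi.mpr (show (0:ℝ) < x + 1 by linarith))
      (by norm_num : (0:ℝ) ≤ (1/2:ℝ)) (by norm_num : (0:ℝ) ≤ (1/2:ℝ)) (by norm_num)
  simp only [smul_eq_mul, Function.comp_apply] at hc
  rw [show (1/2:ℝ) * x + (1/2:ℝ) * (x+1) = x + 1/2 by ring] at hc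
  have h3 : Real.Gamma (x + 1/2) ≤
      Real.exp (1/2 * Real.log (Real.Gamma x) + 1/2 * Real.log (Real.Gamma (x+1))) := by
    calc Real.Gamma (x+1/2) = Real.exp (Real.log (Real.Gamma (x+1/2))) :=
          (Real.exp_log (Real.Gamma_pos_of_pos (by linarith))).symm
    _ ≤ _ := Real.exp_le_exp.mpr hc
  rw [Real.Gamma_add_one (ne_of_gt hx)] at h3
  have e1 : 1/2 * Real.log (Real.Gamma x) + 1/2 * Real.log (x * Real.Gamma x)
      = Real.log (Real.Gamma x) + Real.log x * (1/2) := by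
    rw [Real.log_mul (ne_of_gt hx) (ne_of_gt h1)]; ring
  rw [e1, Real.exp_add, Real.exp_log h1, ← Real.rpow_def_of_pos hx,
    ← Real.sqrt_eq_rpow] at h3
  linarith [h3]

private lemma summable_aux (ν c : ℝ) (hν : 0 < ν) (hc : 0 ≤ c) :
    Summable (fun k : ℕ =>
      Real.Gamma ((ν + k + 1) / 2) * c ^ k / (Nat.factorial k)) := by
  apply summable_of_ratio_norm_eventually_le (r := 1/2) (by norm_num)
  filter_upwards [eventually_ge_atTop ⌈max ν (4*c^2)⌉₊] with k hk
  have hkν : ν ≤ (k:ℝ) := le_trans (le_max_left _ _) (Nat.ceil_le.mp (le_refl _) |>.trans (by exact_mod_cast Nat.cast_le.mpr hk))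
  have hkc : 4*c^2 ≤ (k:ℝ) := le_trans (le_max_right _ _) (Nat.ceil_le.mp (le_refl _) |>.trans (by exact_mod_cast Nat.cast_le.mpr hk))
  set x : ℝ := (ν + k + 1) / 2 with hxdef
  have hx : 0 < x := by positivity
  have hΓx : 0 < Real.Gamma x := Real.Gamma_pos_of_pos hx
  have hfk : (0:ℝ) < (Nat.factorial k : ℝ) := by positivity
  have harg : (ν + ((k:ℝ)+1) + 1) / 2 = x + 1/2 := by rw [hxdef]; ring
  have hnn1 : (0:ℝ) ≤ Real.Gamma ((ν + ((k:ℝ)+1) + 1) / 2) * c ^ (k+1) / (Nat.factorial (k+1)) := by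
    apply div_nonneg _ (by positivity)
    exact mul_nonneg (Real.Gamma_pos_of_pos (by positivity)).le (pow_nonneg hc _)
  have hnn0 : (0:ℝ) ≤ Real.Gamma x * c ^ k / (Nat.factorial k) :=
    div_nonneg (mul_nonneg hΓx.le (pow_nonneg hc _)) hfk.le
  have hstep : Real.Gamma ((ν + ((k:ℝ)+1) + 1) / 2) * c ^ (k+1) / (Nat.factorial (k+1))
      ≤ (Real.sqrt x * c / ((k:ℝ)+1)) * (Real.Gamma x * c ^ k / (Nat.factorial k)) := by
    rw [harg]
    have h1 : Real.Gamma (x + 1/2) * c ^ (k+1) / (Nat.factorial (k+1))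
        ≤ (Real.sqrt x * Real.Gamma x) * c ^ (k+1) / (Nat.factorial (k+1)) := by
      gcongr
      exact gautschi_aux hx
    refine h1.trans (le_of_eq ?_)
    have hfac : ((Nat.factorial (k+1)) : ℝ) = ((k:ℝ)+1) * (Nat.factorial k) := by
      push_cast [Nat.factorial_succ]; ring
    have hk1 : ((k:ℝ)+1) ≠ 0 := by positivity
    rw [hfac, pow_succ]
    field_simp
  have hratio : Real.sqrt x * c / ((k:ℝ)+1) ≤ 1/2 := by
    have hs : Real.sqrt x ≤ Real.sqrt ((k:ℝ)+1) := Real.sqrt_le_sqrt (by rw [hxdef]; linarith)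
    have h2c : 2*c ≤ Real.sqrt ((k:ℝ)+1) := by
      rw [show (2*c) = Real.sqrt ((2*c)^2) from (Real.sqrt_sq (by linarith)).symm]
      exact Real.sqrt_le_sqrt (by nlinarith)
    have ht : (Real.sqrt ((k:ℝ)+1))^2 = (k:ℝ)+1 := Real.sq_sqrt (by positivity)
    rw [div_le_iff₀ (by positivity)]
    nlinarith [Real.sqrt_nonneg x, Real.sqrt_nonneg ((k:ℝ)+1), hc]
  have := hstep.trans (mul_le_mul_of_nonneg_right hratio hnn0)
  calc ‖Real.Gamma ((ν + ((k:ℕ)+1:ℕ) + 1) / 2) * c ^ (k+1) / (Nat.factorial (k+1))‖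
      = Real.Gamma ((ν + ((k:ℝ)+1) + 1) / 2) * c ^ (k+1) / (Nat.factorial (k+1)) := by
        push_cast
        rw [Real.norm_eq_abs, abs_of_nonneg (by exact_mod_cast hnn1)]
  _ ≤ (1/2) * (Real.Gamma x * c ^ k / (Nat.factorial k)) := this
  _ = (1/2) * ‖Real.Gamma ((ν + k + 1) / 2) * c ^ k / (Nat.factorial k)‖ := by
        rw [Real.norm_eq_abs, abs_of_nonneg hnn0]

theorem stmt_7 (ν δ : ℝ) (hν : 0 < ν) (hδ : 0 < δ)
    (ρ : ℝ → ℝ)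
    (hρ : ∀ x, ρ x = Real.exp (-δ ^ 2 / 2) *
      (∑' k : ℕ, Real.Gamma ((ν + k + 1) / 2) * (δ * x) ^ k / (Nat.factorial k) *
        (2 / (ν + x ^ 2)) ^ ((k : ℝ) / 2)) / Real.Gamma ((ν + 1) / 2)) :
    Summable (fun k : ℕ =>
      Real.Gamma ((ν + k + 1) / 2) * (Real.sqrt 2 * δ) ^ k / (Nat.factorial k)) ∧
    Tendsto ρ atTop (nhds (Real.exp (-δ ^ 2 / 2) *
      (∑' k : ℕ, Real.Gamma ((ν + k + 1) / 2) * (Real.sqrt 2 * δ) ^ k /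
        (Nat.factorial k)) / Real.Gamma ((ν + 1) / 2))) := by
  set c : ℝ := Real.sqrt 2 * δ with hcdef
  have hc : 0 ≤ c := by positivity
  set a : ℕ → ℝ := fun k => Real.Gamma ((ν + k + 1) / 2) * c ^ k / (Nat.factorial k) with hadef
  have hsum : Summable a := summable_aux ν c hν hc
  have ha : ∀ k, 0 ≤ a k := by
    intro k
    apply div_nonneg _ (by positivity)
    exact mul_nonneg (Real.Gamma_pos_of_pos (by positivity)).le (pow_nonneg hc _)
  refine ⟨hsum, ?_⟩
  -- key identity for x ≥ 1
  have key : ∀ x : ℝ, 1 ≤ x → ∀ k : ℕ,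
      Real.Gamma ((ν + k + 1) / 2) * (δ * x) ^ k / (Nat.factorial k) *
        (2 / (ν + x ^ 2)) ^ ((k : ℝ) / 2)
      = a k * (x / Real.sqrt (ν + x ^ 2)) ^ k := by
    intro x hx k
    have hA : 0 < ν + x ^ 2 := by positivity
    have h1 : (2 / (ν + x ^ 2)) ^ ((k:ℝ)/2)
        = (Real.sqrt 2 / Real.sqrt (ν + x ^ 2)) ^ k := by
      rw [show ((k:ℝ)/2) = (1/2) * (k:ℝ) by ring,
        Real.rpow_mul (by positivity : (0:ℝ) ≤ 2 / (ν + x ^ 2)),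
        Real.rpow_natCast, ← Real.sqrt_eq_rpow,
        Real.sqrt_div (by norm_num : (0:ℝ) ≤ 2)]
    rw [h1, hadef]
    have hsA : Real.sqrt (ν + x ^ 2) ≠ 0 := ne_of_gt (Real.sqrt_pos.mpr hA)
    field_simp
    ring
  -- limit of x / sqrt (ν + x^2)
  have hB : Tendsto (fun x : ℝ => x / Real.sqrt (ν + x ^ 2)) atTop (nhds 1) := by
    have hpow : Tendsto (fun x : ℝ => ν + x ^ 2) atTop atTop :=
      tendsto_atTop_add_const_left _ ν (tendsto_pow_atTop (by norm_num))
    have h0 : Tendsto (fun x : ℝ => ν / (ν + x ^ 2)) atTop (nhds 0) :=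
      Tendsto.div_atTop tendsto_const_nhds hpow
    have h2 : Tendsto (fun x : ℝ => 1 - ν / (ν + x ^ 2)) atTop (nhds 1) := by
      simpa using tendsto_const_nhds.sub h0
    have h3 : Tendsto (fun x : ℝ => Real.sqrt (1 - ν / (ν + x ^ 2))) atTop (nhds 1) := by
      have := (Real.continuous_sqrt.tendsto 1).comp h2
      simpa [Function.comp_def] using this
    apply h3.congr'
    filter_upwards [eventually_ge_atTop 1] with x hx
    have hA : 0 < ν + x ^ 2 := by positivity
    rw [show 1 - ν / (ν + x ^ 2) = x ^ 2 / (ν + x ^ 2) by field_simp; ring,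
      Real.sqrt_div (by positivity), Real.sqrt_sq (by linarith)]
  -- dominated convergence
  have hT : Tendsto (fun x : ℝ => ∑' k : ℕ, a k * (x / Real.sqrt (ν + x ^ 2)) ^ k)
      atTop (nhds (∑' k : ℕ, a k)) := by
    apply tendsto_tsum_of_dominated_convergence hsum
    · intro k
      have := (hB.pow k).const_mul (a k)
      simpa using this
    · filter_upwards [eventually_ge_atTop 1] with x hx k
      have hA : 0 < ν + x ^ 2 := by positivity
      have hh0 : 0 ≤ x / Real.sqrt (ν + x ^ 2) := by positivity
      have hh1 : x / Real.sqrt (ν + x ^ 2) ≤ 1 := by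
        rw [div_le_one (Real.sqrt_pos.mpr hA)]
        calc x = Real.sqrt (x ^ 2) := (Real.sqrt_sq (by linarith)).symm
        _ ≤ Real.sqrt (ν + x ^ 2) := Real.sqrt_le_sqrt (by linarith)
      rw [Real.norm_eq_abs, abs_of_nonneg (mul_nonneg (ha k) (pow_nonneg hh0 k))]
      calc a k * (x / Real.sqrt (ν + x ^ 2)) ^ k ≤ a k * 1 :=
            mul_le_mul_of_nonneg_left (pow_le_one₀ hh0 hh1) (ha k)
      _ = a k := mul_one _
  have hS : Tendsto (fun x : ℝ => ∑' k : ℕ,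
      Real.Gamma ((ν + k + 1) / 2) * (δ * x) ^ k / (Nat.factorial k) *
        (2 / (ν + x ^ 2)) ^ ((k : ℝ) / 2)) atTop (nhds (∑' k : ℕ, a k)) := by
    apply hT.congr'
    filter_upwards [eventually_ge_atTop 1] with x hx
    exact tsum_congr fun k => (key x hx k).symm
  have hfinal := (hS.const_mul (Real.exp (-δ ^ 2 / 2))).div_const (Real.Gamma ((ν + 1) / 2))
  apply hfinal.congr
  intro x
  rw [hρ x]
end
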